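/- Non-robustness of the standard GP posterior: let μ(y) = m + K(K + σ²I)⁻¹(y − m) and Σ = K(K + σ²I)⁻¹σ²I with K symmetric positive definite and σ² > 0. If y and yᶜ differ only in the m-th coordinate, then ½(μ(yᶜ) − μ(y))ᵀ Σ⁻¹ (μ(yᶜ) − μ(y)) = C · (y_m − yᶜ_m)² where C = ½ [(K + σ²I)⁻¹ K σ⁻²]_{mm} > 0; hence this quantity tends to infinity as |yᶜ_m| → ∞. -/

import Mathlib

open Matrix Filter

theorem gp_not_robust (n : ℕ) (K : Matrix (Fin n) (Fin n) ℝ) (hK : K.PosDef)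
    (σ2 : ℝ) (hσ : 0 < σ2) (m : Fin n) (mean : Fin n → ℝ) (y yc : Fin n → ℝ)
    (hagree : ∀ i, i ≠ m → y i = yc i)
    (μ : (Fin n → ℝ) → (Fin n → ℝ))
    (hμ : ∀ v, μ v = mean + (K * (K + σ2 • (1 : Matrix (Fin n) (Fin n) ℝ))⁻¹).mulVec (v - mean))
    (S : Matrix (Fin n) (Fin n) ℝ)
    (hS : S = K * (K + σ2 • (1 : Matrix (Fin n) (Fin n) ℝ))⁻¹ * (σ2 • (1 : Matrix (Fin n) (Fin n) ℝ)))
    (C : ℝ)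
    (hC : C = (1/2) * (((K + σ2 • (1 : Matrix (Fin n) (Fin n) ℝ))⁻¹ * K * (σ2⁻¹ • (1 : Matrix (Fin n) (Fin n) ℝ))) m m)) :
    (1/2) * ((μ yc - μ y) ⬝ᵥ S⁻¹.mulVec (μ yc - μ y)) = C * (y m - yc m) ^ 2
    ∧ 0 < C
    ∧ Tendsto (fun t : ℝ => C * (y m - t) ^ 2) (cocompact ℝ) atTop := by
  set A : Matrix (Fin n) (Fin n) ℝ := K + σ2 • (1 : Matrix (Fin n) (Fin n) ℝ) with hAdef
  -- A is positive definite
  have hsm : (σ2 • (1 : Matrix (Fin n) (Fin n) ℝ)).PosSemidef := by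
    refine Matrix.PosSemidef.of_dotProduct_mulVec_nonneg ?_ (fun x => ?_)
    · unfold Matrix.IsHermitian
      simp
    · have h1 : (σ2 • (1 : Matrix (Fin n) (Fin n) ℝ)).mulVec x = σ2 • x := by
        rw [smul_mulVec, one_mulVec]
      rw [h1]
      simp only [star_trivial, dotProduct_smul, smul_eq_mul]
      have h2 : (0:ℝ) ≤ x ⬝ᵥ x := by
        simpa using dotProduct_star_self_nonneg x
      positivity
  have hA : A.PosDef := hK.add_posSemidef hsm
  have hAu : IsUnit A.det := isUnit_iff_isUnit_det A |>.1 hA.isUnit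
  have hKu : IsUnit K.det := isUnit_iff_isUnit_det K |>.1 hK.isUnit
  have hAAinv : A * A⁻¹ = 1 := mul_nonsing_inv A hAu
  have hAinvA : A⁻¹ * A = 1 := nonsing_inv_mul A hAu
  have hKKinv : K * K⁻¹ = 1 := mul_nonsing_inv K hKu
  -- commutation
  have hKA : K * A = A * K := by
    simp [hAdef, mul_add, add_mul, Matrix.mul_smul, Matrix.smul_mul]
  have hcomm : A⁻¹ * K = K * A⁻¹ := by
    calc A⁻¹ * K = A⁻¹ * K * (A * A⁻¹) := by rw [hAAinv, mul_one]
    _ = A⁻¹ * (K * A) * A⁻¹ := by simp only [mul_assoc]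
    _ = A⁻¹ * (A * K) * A⁻¹ := by rw [hKA]
    _ = (A⁻¹ * A) * (K * A⁻¹) := by simp only [mul_assoc]
    _ = K * A⁻¹ := by rw [hAinvA, one_mul]
  -- the difference vector
  set c : ℝ := yc m - y m with hcdef
  have hu : yc - y = Pi.single m c := by
    funext i
    by_cases hi : i = m
    · subst hi; simp [hcdef]
    · simp [Pi.single_apply, hi, (hagree i hi).symm]
  have hd : μ yc - μ y = (K * A⁻¹).mulVec (Pi.single m c) := by
    rw [hμ, hμ, ← hu]
    have : mean + (K * A⁻¹).mulVec (yc - mean) - (mean + (K * A⁻¹).mulVec (y - mean))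
        = (K * A⁻¹).mulVec (yc - mean) - (K * A⁻¹).mulVec (y - mean) := by abel
    rw [this, ← mulVec_sub]
    congr 1
    abel
  -- inverse of S
  have hprod1 : K * A⁻¹ * (A * K⁻¹) = 1 := by
    calc K * A⁻¹ * (A * K⁻¹) = K * (A⁻¹ * A) * K⁻¹ := by simp only [mul_assoc]
    _ = 1 := by rw [hAinvA, mul_one, hKKinv]
  have hprod2 : A * K⁻¹ * (K * A⁻¹) = 1 := by
    have hKinvK : K⁻¹ * K = 1 := nonsing_inv_mul K hKu
    calc A * K⁻¹ * (K * A⁻¹) = A * (K⁻¹ * K) * A⁻¹ := by simp only [mul_assoc]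
    _ = 1 := by rw [hKinvK, mul_one, hAAinv]
  have hSinv : S⁻¹ = σ2⁻¹ • (A * K⁻¹) := by
    refine inv_eq_right_inv ?_
    rw [hS]
    have : K * A⁻¹ * (σ2 • (1 : Matrix (Fin n) (Fin n) ℝ)) * (σ2⁻¹ • (A * K⁻¹))
        = (σ2⁻¹ * σ2) • (K * A⁻¹ * (A * K⁻¹)) := by
      rw [Matrix.mul_smul, Matrix.mul_smul, mul_one, Matrix.smul_mul, smul_smul]
    rw [this, hprod1, inv_mul_cancel₀ hσ.ne', one_smul]
  -- compute S⁻¹ *ᵥ d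
  have hSd : S⁻¹.mulVec (μ yc - μ y) = σ2⁻¹ • (Pi.single m c : Fin n → ℝ) := by
    rw [hd, hSinv, smul_mulVec, mulVec_mulVec, hprod2, one_mulVec]
  -- the quadratic form value
  have hKAm : ((K * A⁻¹).mulVec (Pi.single m c)) m = (K * A⁻¹) m m * c := by
    rw [mulVec_single]
    simp
  have hLHS : (1/2) * ((μ yc - μ y) ⬝ᵥ S⁻¹.mulVec (μ yc - μ y))
      = (1/2) * (σ2⁻¹ * ((K * A⁻¹) m m * c * c)) := by
    rw [hSd, hd, dotProduct_smul, smul_eq_mul, dotProduct_single, hKAm]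
  have hCval : C = (1/2) * (σ2⁻¹ * (K * A⁻¹) m m) := by
    rw [hC]
    have : A⁻¹ * K * (σ2⁻¹ • (1 : Matrix (Fin n) (Fin n) ℝ)) = σ2⁻¹ • (K * A⁻¹) := by
      rw [Matrix.mul_smul, mul_one, hcomm]
    rw [this, Matrix.smul_apply, smul_eq_mul]
  have heq : (1/2) * ((μ yc - μ y) ⬝ᵥ S⁻¹.mulVec (μ yc - μ y)) = C * (y m - yc m) ^ 2 := by
    rw [hLHS, hCval]
    have : (y m - yc m) ^ 2 = c * c := by rw [hcdef]; ring
    rw [this]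
    ring
  -- positivity of C
  have hKApd : (K * A).PosDef := by
    have h1 : K * A = K * K + σ2 • K := by
      simp [hAdef, mul_add, Matrix.mul_smul]
    have h2 : (K * K).PosSemidef := by
      have := posSemidef_conjTranspose_mul_self K
      rwa [hK.isHermitian] at this
    have h3 : (σ2 • K).PosDef := by
      refine Matrix.PosDef.of_dotProduct_mulVec_pos ?_ (fun x hx => ?_)
      · unfold Matrix.IsHermitian
        rw [conjTranspose_smul, hK.isHermitian]
        simp
      · rw [smul_mulVec]
        simp only [star_trivial, dotProduct_smul, smul_eq_mul]
        exact mul_pos hσ (by simpa using hK.dotProduct_mulVec_pos hx)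
    rw [h1]
    exact Matrix.PosDef.posSemidef_add h2 h3
  have hpos : 0 < (K * A⁻¹) m m := by
    set e : Fin n → ℝ := Pi.single m (1:ℝ) with hedef
    set w : Fin n → ℝ := A⁻¹.mulVec e with hwdef
    have hAw : A.mulVec w = e := by
      rw [hwdef, mulVec_mulVec, hAAinv, one_mulVec]
    have hw0 : w ≠ 0 := by
      intro h
      have : e = 0 := by rw [← hAw, h, mulVec_zero]
      have := congrFun this m
      simp [hedef] at this
    have hsym : ∀ a b : Fin n → ℝ, a ⬝ᵥ K.mulVec b = b ⬝ᵥ K.mulVec a := by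
      intro a b
      have hKt : Kᵀ = K := by
        have := hK.isHermitian
        simpa [Matrix.IsHermitian] using this
      rw [dotProduct_mulVec, ← mulVec_transpose, hKt]
      exact dotProduct_comm _ _
    have key : (K * A⁻¹) m m = w ⬝ᵥ (K * A).mulVec w := by
      have hKAe : (K * A⁻¹).mulVec e = K.mulVec w := by
        rw [hwdef, mulVec_mulVec]
      have h1 : (K * A).mulVec w = K.mulVec e := by
        rw [hwdef, mulVec_mulVec, mul_assoc, hAAinv, mul_one]
      have h0 : (K * A⁻¹) m m = e ⬝ᵥ (K * A⁻¹).mulVec e := by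
        rw [hedef, mulVec_single, single_dotProduct]
        simp
      rw [h0, hKAe, hsym e w, h1]
    rw [key]
    simpa using hKApd.dotProduct_mulVec_pos hw0
  have hCpos : 0 < C := by
    rw [hCval]
    have h1 : 0 < σ2⁻¹ * (K * A⁻¹) m m := mul_pos (inv_pos.mpr hσ) hpos
    linarith
  refine ⟨heq, hCpos, ?_⟩
  -- the tendsto part
  have habs : Tendsto (fun t : ℝ => |t|) (cocompact ℝ) atTop := by
    exact (tendsto_norm_cocompact_atTop (E := ℝ)).congr fun t => Real.norm_eq_abs t
  have h1 : Tendsto (fun t : ℝ => |t| - |y m|) (cocompact ℝ) atTop :=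
    tendsto_atTop_add_const_right _ (-|y m|) habs
  have h2 : Tendsto (fun t : ℝ => |y m - t|) (cocompact ℝ) atTop := by
    refine tendsto_atTop_mono (fun t => ?_) h1
    have := abs_sub_abs_le_abs_sub t (y m)
    rw [abs_sub_comm] at this
    linarith
  have h3 : Tendsto (fun t : ℝ => (y m - t) ^ 2) (cocompact ℝ) atTop := by
    refine tendsto_atTop_mono' _ ?_ h2
    filter_upwards [h2.eventually_ge_atTop 1] with t ht
    calc |y m - t| ≤ |y m - t| ^ 2 := le_self_pow₀ ht (by norm_num)
    _ = (y m - t) ^ 2 := sq_abs _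
  exact h3.const_mul_atTop hCpos
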